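/- In the single-marble model with parameters φ_i, let u_B be the block policy determined by an ordering v^1,…,v^m of the urns, with state counts x(t), and let τ(k) := ∑_{j=1}^{k−1} N_{v^j} be the first stage at which urn v^k is queried. Then for each k, Q(x(τ(k))) = 1 − ∑_{j=1}^{k−1} φ_{v^j}, and the total expected cost satisfies E[C](u_B) = ∑_{k=1}^{m} (N_{v^k} − (N_{v^k}+1)·φ_{v^k}/2) − ∑_{k=1}^{m−1} ∑_{l=k+1}^{m} N_{v^l} · φ_{v^k}. -/

import Mathlib

open Finset

variable {V : Type*} [Fintype V] [DecidableEq V]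

/-- `phi μ U` is the probability that every urn in `U` contains a red marble:
the sum of `μ T` over all `T ⊇ U`. -/
noncomputable def phi (μ : Finset V → ℝ) (U : Finset V) : ℝ :=
  ∑ T ∈ univ.filter (fun T => U ⊆ T), μ T

/-- `Qfun N μ x` is the probability that no red marble appears among the first
`x i` randomly drawn marbles of each urn `i`. -/
noncomputable def Qfun (N : V → ℕ) (μ : Finset V → ℝ) (x : V → ℕ) : ℝ :=
  ∑ T : Finset V, μ T * ∏ i ∈ T, (1 - (x i : ℝ) / (N i : ℝ))

/-- `Rfun N μ U x` is the probability that no red marble has been drawn and every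
urn in `U` contains a red marble. -/
noncomputable def Rfun (N : V → ℕ) (μ : Finset V → ℝ) (U : Finset V) (x : V → ℕ) : ℝ :=
  ∑ T ∈ univ.filter (fun T => U ⊆ T), μ T * ∏ i ∈ T, (1 - (x i : ℝ) / (N i : ℝ))

/-- A valid policy: a finite sequence of urn queries in which urn `i` occurs
exactly `N i` times. -/
def validPolicy (N : V → ℕ) (L : List V) : Prop := ∀ i, L.count i = N i

/-- Expected cost (expected number of blue marbles drawn) of a policy `L`. -/
noncomputable def ECost (N : V → ℕ) (μ : Finset V → ℝ) (L : List V) : ℝ :=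
  ∑ t ∈ Finset.range L.length, Qfun N μ (fun i => (L.take (t + 1)).count i)

/-- The block policy determined by an ordering `v` of the urns: query urn `v 0`
for `N (v 0)` stages, then `v 1` for `N (v 1)` stages, and so on. -/
def blockPolicy (N : V → ℕ) (v : Fin (Fintype.card V) → V) : List V :=
  (List.ofFn v).flatMap (fun i => List.replicate (N i) i)

/-- The single-marble model with parameters `φ i`. -/
noncomputable def muSingle (φ : V → ℝ) : Finset V → ℝ :=
  fun T => if T.card = 1 then ∑ i ∈ T, φ i
    else if T = ∅ then 1 - ∑ i : V, φ i else 0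


section Helpers

variable {V : Type*} [Fintype V] [DecidableEq V]

lemma Qfun_single (N : V → ℕ) (φ : V → ℝ) (x : V → ℕ) :
    Qfun N (muSingle φ) x = 1 - ∑ i : V, φ i * ((x i : ℝ) / (N i : ℝ)) := by
  classical
  have hsub : ({∅} ∪ Finset.univ.image fun i : V => ({i} : Finset V)) ⊆
      (Finset.univ : Finset (Finset V)) := Finset.subset_univ _
  rw [Qfun, ← Finset.sum_subset hsub]
  · have hdisj : Disjoint ({∅} : Finset (Finset V))
        (Finset.univ.image fun i : V => ({i} : Finset V)) := by
      simp [Finset.disjoint_left]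
    rw [Finset.sum_union hdisj, Finset.sum_singleton,
      Finset.sum_image (by intro a _ b _ h; exact Finset.singleton_injective h)]
    have hμ0 : muSingle φ ∅ = 1 - ∑ i : V, φ i := by simp [muSingle]
    have hμ1 : ∀ i : V, muSingle φ {i} = φ i := by intro i; simp [muSingle]
    rw [hμ0]
    simp only [hμ1, Finset.prod_singleton, Finset.prod_empty, mul_one]
    have : ∑ i : V, φ i * (1 - (x i : ℝ) / (N i : ℝ)) =
        (∑ i : V, φ i) - ∑ i : V, φ i * ((x i : ℝ) / (N i : ℝ)) := by
      rw [← Finset.sum_sub_distrib]; exact Finset.sum_congr rfl fun i _ => by ring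
    rw [this]; ring
  · intro T _ hT
    simp only [Finset.mem_union, Finset.mem_singleton, Finset.mem_image] at hT
    push_neg at hT
    have h1 : T ≠ ∅ := hT.1.ne_empty
    have h2 : T.card ≠ 1 := by
      intro h
      obtain ⟨a, rfl⟩ := Finset.card_eq_one.mp h
      exact hT.2 a (Finset.mem_univ a) rfl
    simp [muSingle, h2, h1]

lemma count_take_Bl (N : V → ℕ) : ∀ (w : List V), w.Nodup → ∀ (k : ℕ) (i : V),
    ((w.flatMap fun a => List.replicate (N a) a).take (((w.take k).map N).sum)).count i
      = if i ∈ w.take k then N i else 0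
  | [], _, k, i => by simp
  | a :: w, hw, 0, i => by simp
  | a :: w, hw, k + 1, i => by
    rw [List.nodup_cons] at hw
    have hta : ∀ (s : ℕ) (L : List V),
        List.take (N a + s) (List.replicate (N a) a ++ L)
          = List.replicate (N a) a ++ L.take s := by
      intro s L
      have := List.take_length_add_append (l₁ := List.replicate (N a) a) (l₂ := L) s
      rwa [List.length_replicate] at this
    rw [List.take_succ_cons, List.map_cons, List.sum_cons, List.flatMap_cons, hta,
      List.count_append, List.count_replicate, count_take_Bl N w hw.2 k i]
    by_cases hia : i = a
    · subst hia
      have hnt : i ∉ w.take k := fun h => hw.1 (List.mem_of_mem_take h)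
      simp [hnt]
    · simp only [beq_iff_eq, List.mem_cons]
      rw [if_neg (Ne.symm hia), zero_add,
        if_congr (Iff.symm (or_iff_right hia)) (rfl : N i = N i) (rfl : (0:ℕ) = 0)]

lemma take_ofFn' {α : Type*} : ∀ (n : ℕ) (v : Fin n → α) (k : ℕ) (hk : k ≤ n),
    (List.ofFn v).take k = List.ofFn (fun i : Fin k => v (Fin.castLE hk i))
  | n, v, 0, _ => by simp
  | 0, v, k + 1, hk => by omega
  | n + 1, v, k + 1, hk => by
    rw [List.ofFn_succ, List.take_succ_cons,
      take_ofFn' n (fun i => v i.succ) k (by omega),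
      List.ofFn_succ (f := fun i : Fin (k+1) => v (Fin.castLE hk i))]
    rfl

lemma sum_Iio_fin {M : Type*} [AddCommMonoid M] {n : ℕ} (k : Fin n) (g : Fin n → M) :
    ∑ j ∈ Finset.Iio k, g j = ∑ i : Fin k.val, g (Fin.castLE k.2.le i) := by
  rcases Nat.eq_zero_or_pos k.val with hk0 | hk0
  · have h1 : Finset.Iio k = ∅ :=
      Finset.eq_empty_of_forall_notMem fun j hj =>
        absurd (Fin.lt_def.mp (Finset.mem_Iio.mp hj)) (by omega)
    have h2 : (Finset.univ : Finset (Fin k.val)) = ∅ := by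
      rw [Finset.univ_eq_empty_iff, hk0]; exact Fin.isEmpty'
    rw [h1, h2, Finset.sum_empty, Finset.sum_empty]
  · refine Finset.sum_nbij' (i := fun j => (⟨j.val % k.val, Nat.mod_lt _ hk0⟩ : Fin k.val))
      (j := fun i => Fin.castLE k.2.le i) ?_ ?_ ?_ ?_ ?_
    · intro j _; exact Finset.mem_univ _
    · intro i _; exact Finset.mem_Iio.mpr (Fin.lt_def.mpr i.2)
    · intro j hj; ext; simp [Nat.mod_eq_of_lt (Fin.lt_def.mp (Finset.mem_Iio.mp hj))]
    · intro i _; ext; simp [Nat.mod_eq_of_lt i.2]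
    · intro j hj
      have : Fin.castLE k.2.le (⟨j.val % k.val, Nat.mod_lt _ hk0⟩ : Fin k.val) = j := by
        ext; simp [Nat.mod_eq_of_lt (Fin.lt_def.mp (Finset.mem_Iio.mp hj))]
      exact (congrArg g this).symm

noncomputable def pairTerm (N : V → ℕ) (φ : V → ℝ) : List V → ℝ
  | [] => 0
  | a :: w => φ a * ((w.map fun b => (N b : ℝ)).sum) + pairTerm N φ w

lemma gauss_real (n : ℕ) : ∑ t ∈ Finset.range n, ((t : ℝ) + 1) = n * (n + 1) / 2 := by
  induction n with
  | zero => simp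
  | succ n ih => rw [Finset.sum_range_succ, ih]; push_cast; ring

lemma ECost_Bl (N : V → ℕ) (hN : ∀ i, 1 ≤ N i) (φ : V → ℝ) :
    ∀ (w : List V),
    ECost N (muSingle φ) (w.flatMap fun a => List.replicate (N a) a)
      = ((w.map fun a => (N a : ℝ) - ((N a : ℝ) + 1) * φ a / 2).sum) - pairTerm N φ w
  | [] => by simp [ECost, pairTerm]
  | a :: w => by
    have hNa : ((N a : ℝ)) ≠ 0 := Nat.cast_ne_zero.mpr (by have := hN a; omega)
    set B := w.flatMap fun a => List.replicate (N a) a with hB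
    have hlen : ((a :: w).flatMap fun a => List.replicate (N a) a).length = N a + B.length := by
      rw [List.flatMap_cons, List.length_append, List.length_replicate]
    rw [ECost, hlen, Finset.sum_range_add]
    have hta : ∀ (s : ℕ),
        List.take (N a + s) (List.replicate (N a) a ++ B)
          = List.replicate (N a) a ++ B.take s := by
      intro s
      have := List.take_length_add_append (l₁ := List.replicate (N a) a) (l₂ := B) s
      rwa [List.length_replicate] at this
    have h1 : ∀ t ∈ Finset.range (N a),
        Qfun N (muSingle φ)
          (fun i => (((a :: w).flatMap fun a => List.replicate (N a) a).take (t + 1)).count i)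
        = 1 - φ a * (((t : ℝ) + 1) / (N a : ℝ)) := by
      intro t ht
      rw [Finset.mem_range] at ht
      rw [List.flatMap_cons, ← hB]
      have htake : (List.replicate (N a) a ++ B).take (t + 1) = List.replicate (t + 1) a := by
        rw [List.take_append_of_le_length (by rw [List.length_replicate]; omega),
          List.take_replicate, Nat.min_eq_left (by omega)]
      rw [Qfun_single]
      congr 1
      rw [show ∑ i : V, φ i * ((((List.replicate (N a) a ++ B).take (t+1)).count i : ℝ) / (N i : ℝ))
          = ∑ i : V, (if i = a then φ a * (((t : ℝ) + 1) / (N a : ℝ)) else 0) from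
        Finset.sum_congr rfl fun i _ => by
          rw [htake, List.count_replicate]
          by_cases hia : a = i
          · subst hia; simp
          · simp [hia, Ne.symm hia]]
      rw [Finset.sum_ite_eq' Finset.univ a fun _ => φ a * (((t : ℝ) + 1) / (N a : ℝ))]
      simp
    rw [Finset.sum_congr rfl h1]
    have h2 : ∀ t ∈ Finset.range B.length,
        Qfun N (muSingle φ)
          (fun i => (((a :: w).flatMap fun a => List.replicate (N a) a).take (N a + t + 1)).count i)
        = Qfun N (muSingle φ) (fun i => (B.take (t + 1)).count i) - φ a := by
      intro t ht
      rw [List.flatMap_cons, ← hB, show N a + t + 1 = N a + (t + 1) from by omega, hta,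
        Qfun_single, Qfun_single]
      have : ∀ i : V, ((((List.replicate (N a) a ++ B.take (t+1)).count i) : ℝ))
          = (if i = a then (N a : ℝ) else 0) + ((B.take (t+1)).count i : ℝ) := by
        intro i
        rw [List.count_append, List.count_replicate]
        by_cases hia : a = i
        · subst hia; push_cast; simp
        · push_cast; simp [hia, Ne.symm hia]
      rw [Finset.sum_congr rfl (fun i _ => by rw [this i])]
      have expand : ∑ i : V, φ i * (((if i = a then (N a : ℝ) else 0)
            + ((B.take (t+1)).count i : ℝ)) / (N i : ℝ))
          = (∑ i : V, (if i = a then φ a * ((N a : ℝ) / (N a : ℝ)) else 0))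
            + ∑ i : V, φ i * (((B.take (t+1)).count i : ℝ) / (N i : ℝ)) := by
        rw [← Finset.sum_add_distrib]
        refine Finset.sum_congr rfl fun i _ => ?_
        by_cases hia : i = a
        · subst hia; rw [if_pos rfl, if_pos rfl]; ring
        · rw [if_neg hia, if_neg hia]; ring
      rw [expand, Finset.sum_ite_eq' Finset.univ a fun _ => φ a * ((N a : ℝ) / (N a : ℝ)),
        if_pos (Finset.mem_univ a), div_self hNa, mul_one]
      ring
    have hEB : ∑ t ∈ Finset.range B.length,
        Qfun N (muSingle φ) (fun i => (B.take (t + 1)).count i) = ECost N (muSingle φ) B := rfl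
    have hs2 : ∑ t ∈ Finset.range B.length,
        (Qfun N (muSingle φ) (fun i => (B.take (t + 1)).count i) - φ a)
        = ECost N (muSingle φ) B - (B.length : ℝ) * φ a := by
      rw [Finset.sum_sub_distrib, hEB, Finset.sum_const, Finset.card_range, nsmul_eq_mul]
    rw [Finset.sum_congr rfl h2, hs2, ECost_Bl N hN φ w]
    have hBlen : (B.length : ℝ) = (w.map fun b => (N b : ℝ)).sum := by
      rw [hB, List.length_flatMap, Nat.cast_list_sum, List.map_map]
      congr 1
      simp [Function.comp_def]
    have hsum1 : ∑ t ∈ Finset.range (N a), (1 - φ a * (((t : ℝ) + 1) / (N a : ℝ)))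
        = (N a : ℝ) - ((N a : ℝ) + 1) * φ a / 2 := by
      rw [Finset.sum_sub_distrib, Finset.sum_const, Finset.card_range, nsmul_eq_mul, mul_one]
      rw [← Finset.mul_sum, ← Finset.sum_div, gauss_real]
      field_simp
    rw [hsum1, hBlen]
    rw [List.map_cons, List.sum_cons, pairTerm]
    ring

lemma pairTerm_ofFn (N : V → ℕ) (φ : V → ℝ) : ∀ (n : ℕ) (v : Fin n → V),
    pairTerm N φ (List.ofFn v) = ∑ k : Fin n, φ (v k) * ∑ l ∈ Finset.Ioi k, (N (v l) : ℝ)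
  | 0, v => by simp [pairTerm]
  | n + 1, v => by
    rw [List.ofFn_succ, pairTerm, pairTerm_ofFn N φ n (fun i => v i.succ), Fin.sum_univ_succ]
    congr 1
    · rw [Fin.sum_Ioi_zero, List.map_ofFn, List.sum_ofFn]
      rfl
    · refine Finset.sum_congr rfl fun k _ => ?_
      rw [Fin.sum_Ioi_succ]

end Helpers

/-- Corollary 7 of the paper: block-policy probabilities and cost in the
single-marble model. -/
theorem single_marble_block_policy_cost (N : V → ℕ) (hN : ∀ i, 1 ≤ N i)
    (φ : V → ℝ) (hφ0 : ∀ i, 0 < φ i) (hφ1 : ∑ i : V, φ i ≤ 1)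
    (v : Fin (Fintype.card V) → V) (hv : Function.Bijective v) :
    (∀ k : Fin (Fintype.card V),
      Qfun N (muSingle φ)
          (fun i => ((blockPolicy N v).take (∑ j ∈ Finset.Iio k, N (v j))).count i) =
        1 - ∑ j ∈ Finset.Iio k, φ (v j)) ∧
    ECost N (muSingle φ) (blockPolicy N v) =
      (∑ k : Fin (Fintype.card V),
          ((N (v k) : ℝ) - ((N (v k) : ℝ) + 1) * φ (v k) / 2)) -
        ∑ k : Fin (Fintype.card V), ∑ l ∈ Finset.Ioi k, (N (v l) : ℝ) * φ (v k) := by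
  classical
  have hinj := hv.injective
  have hNd : (List.ofFn v).Nodup := List.nodup_ofFn.mpr hinj
  constructor
  · intro k
    have hidx : (∑ j ∈ Finset.Iio k, N (v j)) = (((List.ofFn v).take k.val).map N).sum := by
      rw [take_ofFn' _ v k.val k.2.le, List.map_ofFn, List.sum_ofFn,
        sum_Iio_fin k (fun j => N (v j))]
      rfl
    have hcnt : ∀ i : V, ((blockPolicy N v).take (∑ j ∈ Finset.Iio k, N (v j))).count i
        = if i ∈ (List.ofFn v).take k.val then N i else 0 := by
      intro i
      rw [hidx]
      exact count_take_Bl N (List.ofFn v) hNd k.val i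
    rw [Qfun_single]
    congr 1
    have step1 : ∑ i : V, φ i *
          ((((blockPolicy N v).take (∑ j ∈ Finset.Iio k, N (v j))).count i : ℝ) / (N i : ℝ))
        = ∑ i : V, (if i ∈ (List.ofFn v).take k.val then φ i else 0) := by
      refine Finset.sum_congr rfl fun i _ => ?_
      rw [hcnt i]
      by_cases hi : i ∈ (List.ofFn v).take k.val
      · rw [if_pos hi, if_pos hi,
          div_self (Nat.cast_ne_zero.mpr (by have := hN i; omega)), mul_one]
      · rw [if_neg hi, if_neg hi]
        simp
    rw [step1, ← Finset.sum_filter]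
    have hfil : Finset.univ.filter (fun i => i ∈ (List.ofFn v).take k.val)
        = ((List.ofFn v).take k.val).toFinset := by
      ext i; simp
    rw [hfil, List.sum_toFinset φ (hNd.sublist (List.take_sublist _ _)),
      take_ofFn' _ v k.val k.2.le, List.map_ofFn, List.sum_ofFn,
      sum_Iio_fin k (fun j => φ (v j))]
    rfl
  · have hbp : blockPolicy N v = (List.ofFn v).flatMap fun a => List.replicate (N a) a := rfl
    rw [hbp, ECost_Bl N hN φ (List.ofFn v), List.map_ofFn, List.sum_ofFn,
      pairTerm_ofFn N φ _ v]
    congr 1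
    refine Finset.sum_congr rfl fun k _ => ?_
    rw [Finset.mul_sum]
    exact Finset.sum_congr rfl fun l _ => mul_comm _ _
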